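/- Random hyperplane LSH (Goemans–Williamson): Let f, g be nonzero vectors in ℝ^d and let r be drawn uniformly from the unit sphere S^{d-1}. Then P[sign(r·f) = sign(r·g)] = 1 − (1/π)·arccos( (f·g)/(‖f‖‖g‖) ). -/

import Mathlib

open MeasureTheory RealInnerProductSpace

namespace RHP

lemma sign_eq_iff (x y : ℝ) :
    Real.sign x = Real.sign y ↔ ((0 < x ∧ 0 < y) ∨ (x < 0 ∧ y < 0) ∨ (x = 0 ∧ y = 0)) := by
  constructor
  · intro h
    rcases lt_trichotomy x 0 with hx | hx | hx
    · rcases lt_trichotomy y 0 with hy | hy | hy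
      · exact Or.inr (Or.inl ⟨hx, hy⟩)
      · rw [Real.sign_of_neg hx, hy, Real.sign_zero] at h; norm_num at h
      · rw [Real.sign_of_neg hx, Real.sign_of_pos hy] at h; norm_num at h
    · rcases lt_trichotomy y 0 with hy | hy | hy
      · rw [hx, Real.sign_zero, Real.sign_of_neg hy] at h; norm_num at h
      · exact Or.inr (Or.inr ⟨hx, hy⟩)
      · rw [hx, Real.sign_zero, Real.sign_of_pos hy] at h; norm_num at h
    · rcases lt_trichotomy y 0 with hy | hy | hy
      · rw [Real.sign_of_pos hx, Real.sign_of_neg hy] at h; norm_num at h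
      · rw [Real.sign_of_pos hx, hy, Real.sign_zero] at h; norm_num at h
      · exact Or.inl ⟨hx, hy⟩
  · rintro (⟨hx, hy⟩ | ⟨hx, hy⟩ | ⟨hx, hy⟩)
    · rw [Real.sign_of_pos hx, Real.sign_of_pos hy]
    · rw [Real.sign_of_neg hx, Real.sign_of_neg hy]
    · rw [hx, hy]

variable {d : ℕ}

local notation "E" => EuclideanSpace ℝ (Fin d)

lemma measure_image (μ : Measure E)
    (hinv : ∀ T : E ≃ₗᵢ[ℝ] E, μ.map T = μ)
    (T : E ≃ₗᵢ[ℝ] E) {A : Set E} (hA : MeasurableSet A) :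
    μ (T '' A) = μ A := by
  have h1 : T '' A = T.symm ⁻¹' A := by
    ext x
    constructor
    · rintro ⟨y, hy, rfl⟩; simpa using hy
    · intro hx; exact ⟨T.symm x, hx, by simp⟩
  rw [h1, ← Measure.map_apply T.symm.continuous.measurable hA, hinv T.symm]

lemma exists_extension {k : ℕ} (hk : k ≤ d) {v : Fin k → E} (hv : Orthonormal ℝ v) :
    ∃ b : OrthonormalBasis (Fin d) ℝ E, ∀ j : Fin k, b (Fin.castLE hk j) = v j := by
  set s : Set (Fin d) := {i | (i : ℕ) < k} with hs
  set v' : Fin d → E := fun i => if h : (i : ℕ) < k then v ⟨i, h⟩ else 0 with hv'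
  have hcard : Module.finrank ℝ E = Fintype.card (Fin d) := by simp
  have hres : Orthonormal ℝ (s.restrict v') := by
    have : s.restrict v' = v ∘ (fun i : s => (⟨(i : Fin d), i.2⟩ : Fin k)) := by
      funext i
      simp only [Set.restrict_apply, hv', Function.comp_apply]
      exact dif_pos i.2
    rw [this]
    exact hv.comp _ (fun a b hab => by
      apply Subtype.ext; apply Fin.ext
      simpa using congrArg Fin.val hab)
  obtain ⟨b, hb⟩ := hres.exists_orthonormalBasis_extension_of_card_eq hcard
  refine ⟨b, fun j => ?_⟩
  have hmem : (Fin.castLE hk j : Fin d) ∈ s := j.2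
  rw [hb _ hmem]
  simp [hv']

lemma exists_isometry {k : ℕ} (hk : k ≤ d) {v w : Fin k → E}
    (hv : Orthonormal ℝ v) (hw : Orthonormal ℝ w) :
    ∃ T : E ≃ₗᵢ[ℝ] E, ∀ i, T (v i) = w i := by
  obtain ⟨bv, hbv⟩ := exists_extension hk hv
  obtain ⟨bw, hbw⟩ := exists_extension hk hw
  refine ⟨bv.repr.trans bw.repr.symm, fun i => ?_⟩
  simp only [LinearIsometryEquiv.trans_apply]
  rw [← hbv i, bv.repr_self, OrthonormalBasis.repr_symm_single, hbw i]

lemma span_null (μ : Measure E) [IsProbabilityMeasure μ]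
    (hinv : ∀ T : E ≃ₗᵢ[ℝ] E, μ.map T = μ)
    (h0 : μ ({0} : Set E) = 0) :
    ∀ k : ℕ, k < d → ∀ v : Fin k → E, Orthonormal ℝ v →
      μ (Submodule.span ℝ (Set.range v) : Set E) = 0 := by
  intro k
  induction k with
  | zero =>
    intro _ v _
    rw [Set.range_eq_empty v, Submodule.span_empty, Submodule.bot_coe]
    exact h0
  | succ k ih =>
    intro hkd v hv
    set V : Submodule ℝ E := Submodule.span ℝ (Set.range v) with hVdef
    have hvv : ∀ i j, ⟪v i, v j⟫ = if i = j then (1:ℝ) else 0 := orthonormal_iff_ite.mp hv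
    -- find a unit vector orthogonal to V
    have hfr : Module.finrank ℝ V = k + 1 := by
      rw [finrank_span_eq_card hv.linearIndependent]
      simp
    have hVne : V ≠ ⊤ := by
      intro h
      rw [h, finrank_top] at hfr
      simp [finrank_euclideanSpace] at hfr
      omega
    have hbot : Vᗮ ≠ ⊥ := fun h => hVne (Submodule.orthogonal_eq_bot_iff.mp h)
    obtain ⟨w', hw'mem, hw'ne⟩ := (Submodule.ne_bot_iff _).mp hbot
    set w : E := ‖w'‖⁻¹ • w' with hwdef
    have hwnorm : ‖w‖ = 1 := norm_smul_inv_norm hw'ne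
    have hwv : ∀ i, ⟪v i, w⟫ = 0 := by
      intro i
      have h1 : ⟪v i, w'⟫ = 0 := by
        have := (Submodule.mem_orthogonal V w').mp hw'mem
        exact this (v i) (Submodule.subset_span (Set.mem_range_self i))
      rw [hwdef, real_inner_smul_right, h1, mul_zero]
    set vl : E := v (Fin.last k) with hvldef
    set u : ℝ → E := fun θ => Real.cos θ • vl + Real.sin θ • w with hudef
    have hinner_vu : ∀ θ i, ⟪v i, u θ⟫ = if i = Fin.last k then Real.cos θ else 0 := by
      intro θ i
      rw [hudef]
      simp only [inner_add_right, real_inner_smul_right, hvldef, hvv, hwv, mul_zero, add_zero]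
      split <;> simp
    have hww : ⟪w, w⟫ = (1:ℝ) := by
      rw [real_inner_self_eq_norm_sq, hwnorm]; norm_num
    have hvlw : ⟪vl, w⟫ = (0:ℝ) := hwv (Fin.last k)
    have hwvl : ⟪w, vl⟫ = (0:ℝ) := by rw [real_inner_comm]; exact hvlw
    have hvlvl : ⟪vl, vl⟫ = (1:ℝ) := by simpa using hvv (Fin.last k) (Fin.last k)
    have hinner_wu : ∀ θ, ⟪w, u θ⟫ = Real.sin θ := by
      intro θ
      simp only [hudef, inner_add_right, real_inner_smul_right, hwvl, hww]
      ring
    have hinner_uu : ∀ θ, ⟪u θ, u θ⟫ = 1 := by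
      intro θ
      simp only [hudef, inner_add_left, inner_add_right, real_inner_smul_left,
        real_inner_smul_right, hvlvl, hvlw, hwvl, hww]
      nlinarith [Real.sin_sq_add_cos_sq θ]
    set vθ : ℝ → Fin (k+1) → E := fun θ => Function.update v (Fin.last k) (u θ) with hvθdef
    have hvθon : ∀ θ, Orthonormal ℝ (vθ θ) := by
      intro θ
      rw [orthonormal_iff_ite]
      intro i j
      rcases eq_or_ne i (Fin.last k) with hi | hi <;> rcases eq_or_ne j (Fin.last k) with hj | hj
      · subst hi; subst hj
        simp only [hvθdef, Function.update_self]
        rw [hinner_uu]; simp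
      · subst hi
        simp only [hvθdef, Function.update_self, Function.update_of_ne hj]
        rw [real_inner_comm, hinner_vu θ j, if_neg hj, if_neg (Ne.symm hj)]
      · subst hj
        simp only [hvθdef, Function.update_self, Function.update_of_ne hi]
        rw [hinner_vu θ i, if_neg hi, if_neg hi]
      · simp only [hvθdef, Function.update_of_ne hi, Function.update_of_ne hj]
        exact hvv i j
    set S : ℝ → Submodule ℝ E := fun θ => Submodule.span ℝ (Set.range (vθ θ)) with hSdef
    set W : Submodule ℝ E := Submodule.span ℝ (Set.range (v ∘ Fin.castSucc)) with hWdef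
    have hμW : μ (W : Set E) = 0 :=
      ih (by omega) _ (hv.comp _ (Fin.castSucc_injective k))
    have hWS : ∀ θ, W ≤ S θ := by
      intro θ
      rw [hWdef, Submodule.span_le]
      rintro x ⟨i, rfl⟩
      have : (v ∘ Fin.castSucc) i = vθ θ (Fin.castSucc i) := by
        simp only [Function.comp_apply, hvθdef]
        rw [Function.update_of_ne (Fin.castSucc_lt_last i).ne]
      rw [this]
      exact Submodule.subset_span (Set.mem_range_self _)
    -- representation of elements of S θ
    have hAθ : ∀ θ i, ⟪vθ θ i, vl⟫ = if i = Fin.last k then Real.cos θ else 0 := by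
      intro θ i
      rcases eq_or_ne i (Fin.last k) with hi | hi
      · subst hi
        simp only [hvθdef, Function.update_self, if_pos rfl]
        rw [real_inner_comm]
        have := hinner_vu θ (Fin.last k)
        simpa using this
      · simp only [hvθdef, Function.update_of_ne hi, if_neg hi]
        have := hvv i (Fin.last k)
        simpa [if_neg hi] using this
    have hBθ : ∀ θ i, ⟪vθ θ i, w⟫ = if i = Fin.last k then Real.sin θ else 0 := by
      intro θ i
      rcases eq_or_ne i (Fin.last k) with hi | hi
      · subst hi
        simp only [hvθdef, Function.update_self, if_pos rfl]
        rw [real_inner_comm]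
        exact hinner_wu θ
      · simp only [hvθdef, Function.update_of_ne hi, if_neg hi]
        exact hwv i
    have hrep : ∀ θ, ∀ x ∈ S θ, ∃ a : ℝ,
        ⟪x, vl⟫ = a * Real.cos θ ∧ ⟪x, w⟫ = a * Real.sin θ ∧ (a = 0 → x ∈ W) := by
      intro θ x hx
      rw [hSdef] at hx
      obtain ⟨c, hc⟩ := (Submodule.mem_span_range_iff_exists_fun ℝ).mp hx
      refine ⟨c (Fin.last k), ?_, ?_, ?_⟩
      · rw [← hc, sum_inner]
        simp only [real_inner_smul_left, hAθ, mul_ite, mul_zero]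
        rw [Finset.sum_ite_eq' Finset.univ (Fin.last k)]
        simp [mul_comm]
      · rw [← hc, sum_inner]
        simp only [real_inner_smul_left, hBθ, mul_ite, mul_zero]
        rw [Finset.sum_ite_eq' Finset.univ (Fin.last k)]
        simp [mul_comm]
      · intro ha
        rw [← hc, Fin.sum_univ_castSucc, ha, zero_smul, add_zero]
        refine Submodule.sum_mem _ (fun i _ => Submodule.smul_mem _ _ ?_)
        have hcs : vθ θ (Fin.castSucc i) = (v ∘ Fin.castSucc) i := by
          simp only [hvθdef, Function.comp_apply]
          rw [Function.update_of_ne (Fin.castSucc_lt_last i).ne]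
        rw [hcs, hWdef]
        exact Submodule.subset_span (Set.mem_range_self i)
    have hμS : ∀ θ, μ (S θ : Set E) = μ (V : Set E) := by
      intro θ
      obtain ⟨T, hT⟩ := exists_isometry (le_of_lt hkd) hv (hvθon θ)
      have hrange : Set.range (vθ θ) = ⇑T '' Set.range v := by
        rw [← Set.range_comp]
        exact congrArg Set.range (funext fun i => (hT i).symm)
      have himg : (S θ : Set E) = ⇑T '' (V : Set E) := by
        show (Submodule.span ℝ (Set.range (vθ θ)) : Set E)
          = ⇑T '' (Submodule.span ℝ (Set.range v) : Set E)
        rw [hrange]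
        exact (congrArg (fun s : Submodule ℝ E => (s : Set E))
          (Submodule.span_image (s := Set.range v) T.toLinearIsometry.toLinearMap)).trans
          (Submodule.map_coe _ _)
      rw [himg]
      exact measure_image μ hinv T V.closed_of_finiteDimensional.measurableSet
    have hkey : ∀ θ θ', θ ∈ Set.Ioo 0 Real.pi → θ' ∈ Set.Ioo 0 Real.pi → θ ≠ θ' →
        ∀ x, x ∈ S θ → x ∈ S θ' → x ∈ W := by
      intro θ θ' hθ hθ' hne x hx hx'
      obtain ⟨a, ha1, ha2, ha3⟩ := hrep θ x hx
      obtain ⟨b, hb1, hb2, hb3⟩ := hrep θ' x hx'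
      apply ha3
      have h1 : a * Real.cos θ = b * Real.cos θ' := by rw [← ha1, ← hb1]
      have h2 : a * Real.sin θ = b * Real.sin θ' := by rw [← ha2, ← hb2]
      have h3 : a * Real.sin (θ - θ') = 0 := by
        rw [Real.sin_sub]
        linear_combination Real.cos θ' * h2 - Real.sin θ' * h1
      have hs : Real.sin (θ - θ') ≠ 0 := by
        intro h
        have h4 := (Real.sin_eq_zero_iff_of_lt_of_lt
          (by linarith [hθ.1, hθ.2, hθ'.1, hθ'.2] : -Real.pi < θ - θ')
          (by linarith [hθ.1, hθ.2, hθ'.1, hθ'.2] : θ - θ' < Real.pi)).mp h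
        exact hne (by linarith)
      rcases mul_eq_zero.mp h3 with h | h
      · exact h
      · exact absurd h hs
    set θn : ℕ → ℝ := fun n => Real.pi / (n + 2) with hθndef
    have hθmem : ∀ n, θn n ∈ Set.Ioo 0 Real.pi := by
      intro n
      constructor
      · exact div_pos Real.pi_pos (by positivity)
      · rw [div_lt_iff₀ (by positivity)]
        nlinarith [Real.pi_pos]
    have hθinj : Function.Injective θn := by
      intro n m h
      simp only [hθndef] at h
      rw [div_eq_div_iff (by positivity) (by positivity)] at h
      have h2 := mul_left_cancel₀ Real.pi_ne_zero h
      have h3 : ((n:ℝ)) = m := by linarith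
      exact_mod_cast h3
    set D : ℕ → Set E := fun n => (S (θn n) : Set E) \ (W : Set E) with hDdef
    have hDmeas : ∀ n, MeasurableSet (D n) := fun n =>
      ((S (θn n)).closed_of_finiteDimensional.measurableSet).diff
        W.closed_of_finiteDimensional.measurableSet
    have hDdisj : Pairwise (Function.onFun Disjoint D) := by
      intro n m hnm
      rw [Function.onFun, Set.disjoint_left]
      intro x hxn hxm
      exact hxn.2 (hkey _ _ (hθmem n) (hθmem m) (fun h => hnm (hθinj h)) x hxn.1 hxm.1)
    have hDge : ∀ n, μ (V : Set E) ≤ μ (D n) := by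
      intro n
      rw [← hμS (θn n)]
      calc μ (S (θn n) : Set E) ≤ μ (D n ∪ (W : Set E)) := by
            refine measure_mono (fun x hx => ?_)
            by_cases hxW : x ∈ (W : Set E)
            · exact Or.inr hxW
            · exact Or.inl ⟨hx, hxW⟩
        _ ≤ μ (D n) + μ (W : Set E) := measure_union_le _ _
        _ = μ (D n) := by rw [hμW, add_zero]
    by_contra hcon
    have htop : (∑' _ : ℕ, μ (V : Set E)) = ⊤ := ENNReal.tsum_const_eq_top_of_ne_zero hcon
    have hle1 : (∑' n, μ (D n)) ≤ μ (Set.univ : Set E) := by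
      rw [← measure_iUnion hDdisj hDmeas]
      exact measure_mono (Set.subset_univ _)
    have hle : (∑' _ : ℕ, μ (V : Set E)) ≤ ∑' n, μ (D n) := ENNReal.tsum_le_tsum hDge
    rw [htop] at hle
    have := le_trans hle hle1
    rw [measure_univ] at this
    exact absurd this (by simp)

lemma zero_null (μ : Measure E) [IsProbabilityMeasure μ]
    (hsphere : μ (Metric.sphere (0 : E) 1) = 1) :
    μ ({0} : Set E) = 0 := by
  have hcompl : μ (Metric.sphere (0 : E) 1)ᶜ = 0 := by
    rw [measure_compl (Metric.isClosed_sphere.measurableSet) (measure_ne_top μ _), hsphere,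
      measure_univ, tsub_self]
  refine measure_mono_null ?_ hcompl
  intro x hx
  simp only [Set.mem_singleton_iff] at hx
  subst hx
  simp [Metric.mem_sphere]

lemma hyperplane_null (μ : Measure E) [IsProbabilityMeasure μ]
    (hsphere : μ (Metric.sphere (0 : E) 1) = 1)
    (hinv : ∀ T : E ≃ₗᵢ[ℝ] E, μ.map T = μ)
    {u : E} (hu : u ≠ 0) :
    μ {r : E | ⟪r, u⟫ = 0} = 0 := by
  have h0 := zero_null μ hsphere
  have hd : 0 < d := by
    rcases Nat.eq_zero_or_pos d with h | h
    · exfalso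
      apply hu
      subst h
      exact Subsingleton.elim _ _
    · exact h
  set K : Submodule ℝ E := (ℝ ∙ u)ᗮ with hK
  have hset : {r : E | ⟪r, u⟫ = 0} = (K : Set E) := by
    ext r
    simp only [Set.mem_setOf_eq, hK, SetLike.mem_coe,
      Submodule.mem_orthogonal_singleton_iff_inner_left]
  rw [hset]
  -- K has finrank d - 1
  have hfr : Module.finrank ℝ K + 1 = d := by
    have h1 := Submodule.finrank_add_finrank_orthogonal (ℝ ∙ u)
    rw [finrank_span_singleton hu, ← hK] at h1
    simp only [finrank_euclideanSpace, Fintype.card_fin] at h1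
    omega
  set n := Module.finrank ℝ K with hn
  -- orthonormal basis of K, coerced to E
  set b := stdOrthonormalBasis ℝ K with hb
  set v : Fin n → E := fun i => (b i : E) with hv
  have hvon : Orthonormal ℝ v := by
    rw [orthonormal_iff_ite]
    intro i j
    have := orthonormal_iff_ite.mp b.orthonormal i j
    rw [Submodule.coe_inner] at this
    exact this
  have hspan : Submodule.span ℝ (Set.range v) = K := by
    have h1 : Set.range v = (K.subtype) '' Set.range b := by
      rw [← Set.range_comp]; rfl
    rw [h1, ← Submodule.map_span]
    have h2 : Submodule.span ℝ (Set.range ⇑b) = ⊤ := by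
      rw [← OrthonormalBasis.coe_toBasis b]
      exact b.toBasis.span_eq
    rw [h2, Submodule.map_top, Submodule.range_subtype]
  rw [← hspan]
  exact span_null μ hinv h0 n (by omega) v hvon

lemma measurable_signs (u v : E) :
    MeasurableSet {r : E | Real.sign ⟪r, u⟫ = Real.sign ⟪r, v⟫} := by
  have hu : Measurable fun r : E => (⟪r, u⟫ : ℝ) :=
    (continuous_id.inner continuous_const).measurable
  have hv : Measurable fun r : E => (⟪r, v⟫ : ℝ) :=
    (continuous_id.inner continuous_const).measurable
  have hset : {r : E | Real.sign ⟪r, u⟫ = Real.sign ⟪r, v⟫}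
      = ({r : E | 0 < ⟪r, u⟫} ∩ {r : E | 0 < ⟪r, v⟫})
        ∪ (({r : E | ⟪r, u⟫ < 0} ∩ {r : E | ⟪r, v⟫ < 0})
          ∪ ({r : E | ⟪r, u⟫ = (0:ℝ)} ∩ {r : E | ⟪r, v⟫ = (0:ℝ)})) := by
    ext r
    simp only [Set.mem_setOf_eq, Set.mem_union, Set.mem_inter_iff]
    exact sign_eq_iff _ _
  rw [hset]
  exact (((measurableSet_lt measurable_const hu).inter
      (measurableSet_lt measurable_const hv)).union
    (((measurableSet_lt hu measurable_const).inter (measurableSet_lt hv measurable_const)).union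
      ((hu (measurableSet_singleton 0)).inter (hv (measurableSet_singleton 0)))))

lemma measure_sign_eq (μ : Measure E)
    (hinv : ∀ T : E ≃ₗᵢ[ℝ] E, μ.map T = μ)
    (T : E ≃ₗᵢ[ℝ] E) (u v : E) :
    μ {r : E | Real.sign ⟪r, T u⟫ = Real.sign ⟪r, T v⟫}
      = μ {r : E | Real.sign ⟪r, u⟫ = Real.sign ⟪r, v⟫} := by
  have hset : {r : E | Real.sign ⟪r, T u⟫ = Real.sign ⟪r, T v⟫}
      = T.symm ⁻¹' {r : E | Real.sign ⟪r, u⟫ = Real.sign ⟪r, v⟫} := by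
    ext r
    simp only [Set.mem_preimage, Set.mem_setOf_eq]
    rw [← T.inner_map_map (T.symm r) u, ← T.inner_map_map (T.symm r) v, T.apply_symm_apply]
  rw [hset, ← Measure.map_apply T.symm.continuous.measurable (measurable_signs u v), hinv T.symm]

lemma exists_isometry_pair {u v u' v' : E}
    (hu : ‖u‖ = 1) (hv : ‖v‖ = 1) (hu' : ‖u'‖ = 1) (hv' : ‖v'‖ = 1)
    (ht : ⟪u, v⟫ = ⟪u', v'⟫) :
    ∃ T : E ≃ₗᵢ[ℝ] E, T u = u' ∧ T v = v' := by
  have hd1 : 1 ≤ d := by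
    by_contra h
    have hd0 : d = 0 := by omega
    have : u = 0 := by subst hd0; exact Subsingleton.elim _ _
    rw [this, norm_zero] at hu; norm_num at hu
  set t : ℝ := ⟪u, v⟫ with htdef
  have htle : |t| ≤ 1 := by
    have h := abs_real_inner_le_norm u v
    rw [hu, hv] at h
    simpa using h
  have huu : ⟪u, u⟫ = (1:ℝ) := by
    rw [real_inner_self_eq_norm_sq, hu]; norm_num
  have hvv : ⟪v, v⟫ = (1:ℝ) := by
    rw [real_inner_self_eq_norm_sq, hv]; norm_num
  have hu'u' : ⟪u', u'⟫ = (1:ℝ) := by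
    rw [real_inner_self_eq_norm_sq, hu']; norm_num
  have hv'v' : ⟪v', v'⟫ = (1:ℝ) := by
    rw [real_inner_self_eq_norm_sq, hv']; norm_num
  rcases eq_or_ne t 1 with h1 | h1
  · have hvu : u = v := (inner_eq_one_iff_of_norm_eq_one hu hv).mp h1
    have hvu' : u' = v' := (inner_eq_one_iff_of_norm_eq_one hu' hv').mp (ht ▸ h1)
    have hon : Orthonormal ℝ (fun _ : Fin 1 => u) := by
      rw [orthonormal_iff_ite]
      intro i j
      simp [Subsingleton.elim i j, huu, hu]
    have hon' : Orthonormal ℝ (fun _ : Fin 1 => u') := by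
      rw [orthonormal_iff_ite]
      intro i j
      simp [Subsingleton.elim i j, hu'u', hu']
    obtain ⟨T, hT⟩ := exists_isometry hd1 hon hon'
    exact ⟨T, hT 0, by rw [← hvu, ← hvu']; exact hT 0⟩
  rcases eq_or_ne t (-1) with h2 | h2
  · have hneg : ⟪u, -v⟫ = (1:ℝ) := by rw [inner_neg_right, htdef.symm, h2]; norm_num
    have hneg' : ⟪u', -v'⟫ = (1:ℝ) := by rw [inner_neg_right, ← ht, h2]; norm_num
    have hvu : u = -v := (inner_eq_one_iff_of_norm_eq_one hu (by rw [norm_neg]; exact hv)).mp hneg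
    have hvu' : u' = -v' := (inner_eq_one_iff_of_norm_eq_one hu' (by rw [norm_neg]; exact hv')).mp hneg'
    have hon : Orthonormal ℝ (fun _ : Fin 1 => u) := by
      rw [orthonormal_iff_ite]
      intro i j
      simp [Subsingleton.elim i j, huu, hu]
    have hon' : Orthonormal ℝ (fun _ : Fin 1 => u') := by
      rw [orthonormal_iff_ite]
      intro i j
      simp [Subsingleton.elim i j, hu'u', hu']
    obtain ⟨T, hT⟩ := exists_isometry hd1 hon hon'
    refine ⟨T, hT 0, ?_⟩
    have hv2 : v = -u := by rw [hvu, neg_neg]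
    have hv2' : v' = -u' := by rw [hvu', neg_neg]
    rw [hv2, hv2', map_neg, hT 0]
  · -- generic case : -1 < t < 1
    have habs : |t| < 1 := lt_of_le_of_ne htle (by
      intro h
      rcases abs_eq (by norm_num : (0:ℝ) ≤ 1) |>.mp h with h' | h'
      · exact h1 h'
      · exact h2 h')
    have ht2 : (0:ℝ) < 1 - t^2 := by nlinarith [abs_lt.mp habs]
    set s : ℝ := Real.sqrt (1 - t^2) with hsdef
    have hs : 0 < s := Real.sqrt_pos.mpr ht2
    have hs2 : s^2 = 1 - t^2 := Real.sq_sqrt ht2.le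
    set u₂ : E := s⁻¹ • (v - t • u) with hu₂def
    set u₂' : E := s⁻¹ • (v' - t • u') with hu₂'def
    have huv' : ⟪u', v'⟫ = t := ht.symm
    have key : ∀ x y : E, ⟪x, x⟫ = (1:ℝ) → ⟪y, y⟫ = (1:ℝ) → ⟪x, y⟫ = t →
        (⟪x, s⁻¹ • (y - t • x)⟫ = 0 ∧ ⟪s⁻¹ • (y - t • x), s⁻¹ • (y - t • x)⟫ = 1) := by
      intro x y hxx hyy hxy
      have hyx : ⟪y, x⟫ = t := by rw [real_inner_comm]; exact hxy
      constructor
      · rw [real_inner_smul_right, inner_sub_right, real_inner_smul_right, hxy, hxx]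
        ring
      · rw [real_inner_smul_right, real_inner_smul_left, inner_sub_left, inner_sub_right,
          inner_sub_right, real_inner_smul_right, real_inner_smul_right, real_inner_smul_left,
          real_inner_smul_left, hxx, hyy, hxy, hyx]
        field_simp
        nlinarith [hs2]
    obtain ⟨ho1, ho2⟩ := key u v huu hvv rfl
    obtain ⟨ho1', ho2'⟩ := key u' v' hu'u' hv'v' huv'
    rw [← hu₂def] at ho1 ho2
    rw [← hu₂'def] at ho1' ho2'
    have hon : Orthonormal ℝ ![u, u₂] := by
      rw [orthonormal_iff_ite]
      intro i j
      fin_cases i <;> fin_cases j <;>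
        simp only [Matrix.cons_val_zero, Matrix.cons_val_one, Matrix.head_cons] <;>
        first
          | simpa using huu
          | simpa using ho1
          | (rw [real_inner_comm]; simpa using ho1)
          | simpa using ho2
    have hon' : Orthonormal ℝ ![u', u₂'] := by
      rw [orthonormal_iff_ite]
      intro i j
      fin_cases i <;> fin_cases j <;>
        simp only [Matrix.cons_val_zero, Matrix.cons_val_one, Matrix.head_cons] <;>
        first
          | simpa using hu'u'
          | simpa using ho1'
          | (rw [real_inner_comm]; simpa using ho1')
          | simpa using ho2'
    have hd2 : 2 ≤ d := by
      have hcard := hon.linearIndependent.fintype_card_le_finrank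
      simpa using hcard
    obtain ⟨T, hT⟩ := exists_isometry hd2 hon hon'
    have hTu : T u = u' := by simpa using hT 0
    have hTu₂ : T u₂ = u₂' := by simpa using hT 1
    refine ⟨T, hTu, ?_⟩
    have hvrep : v = t • u + s • u₂ := by
      rw [hu₂def, smul_smul, mul_inv_cancel₀ hs.ne', one_smul]
      abel
    have hvrep' : v' = t • u' + s • u₂' := by
      rw [hu₂'def, smul_smul, mul_inv_cancel₀ hs.ne', one_smul]
      abel
    rw [hvrep, hvrep', map_add, T.map_smul, T.map_smul, hTu, hTu₂]

lemma measure_bad_add (μ : Measure E) [IsProbabilityMeasure μ]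
    (hsphere : μ (Metric.sphere (0 : E) 1) = 1)
    (hinv : ∀ T : E ≃ₗᵢ[ℝ] E, μ.map T = μ)
    {u v w : E} (hu : u ≠ 0) (hv : v ≠ 0) (hw : w ≠ 0)
    {a b : ℝ} (ha : 0 < a) (hb : 0 < b) (hvab : v = a • u + b • w) :
    μ {r : E | Real.sign ⟪r, u⟫ ≠ Real.sign ⟪r, w⟫}
      = μ {r : E | Real.sign ⟪r, u⟫ ≠ Real.sign ⟪r, v⟫}
        + μ {r : E | Real.sign ⟪r, v⟫ ≠ Real.sign ⟪r, w⟫} := by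
  set A := {r : E | Real.sign ⟪r, u⟫ ≠ Real.sign ⟪r, v⟫} with hA
  set B := {r : E | Real.sign ⟪r, v⟫ ≠ Real.sign ⟪r, w⟫} with hB
  set C := {r : E | Real.sign ⟪r, u⟫ ≠ Real.sign ⟪r, w⟫} with hC
  set N := {r : E | ⟪r, u⟫ = (0:ℝ)} ∪ {r : E | ⟪r, v⟫ = (0:ℝ)} ∪ {r : E | ⟪r, w⟫ = (0:ℝ)}
    with hNdef
  have hN : μ N = 0 := by
    rw [hNdef]
    exact measure_union_null
      (measure_union_null (hyperplane_null μ hsphere hinv hu)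
        (hyperplane_null μ hsphere hinv hv))
      (hyperplane_null μ hsphere hinv hw)
  have hvinner : ∀ r : E, ⟪r, v⟫ = a * ⟪r, u⟫ + b * ⟪r, w⟫ := by
    intro r
    rw [hvab, inner_add_right, real_inner_smul_right, real_inner_smul_right]
  have hCsub : C ⊆ A ∪ B := by
    intro x hx
    by_contra hcon
    simp only [Set.mem_union, hA, hB, Set.mem_setOf_eq, not_or, not_not] at hcon
    exact hx (hcon.1.trans hcon.2)
  have hsub2 : (A ∪ B) \ C ⊆ N := by
    rintro x ⟨hx, hxC⟩
    simp only [hC, Set.mem_setOf_eq, not_not] at hxC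
    rcases (sign_eq_iff _ _).mp hxC with ⟨hp, hz⟩ | ⟨hp, hz⟩ | ⟨hp, hz⟩
    · exfalso
      have hq : 0 < ⟪x, v⟫ := by rw [hvinner x]; positivity
      rcases hx with hxA | hxB
      · exact hxA ((sign_eq_iff _ _).mpr (Or.inl ⟨hp, hq⟩))
      · exact hxB ((sign_eq_iff _ _).mpr (Or.inl ⟨hq, hz⟩))
    · exfalso
      have hq : ⟪x, v⟫ < 0 := by
        rw [hvinner x]
        nlinarith
      rcases hx with hxA | hxB
      · exact hxA ((sign_eq_iff _ _).mpr (Or.inr (Or.inl ⟨hp, hq⟩)))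
      · exact hxB ((sign_eq_iff _ _).mpr (Or.inr (Or.inl ⟨hq, hz⟩)))
    · exact Or.inl (Or.inl hp)
  have hsub3 : A ∩ B ⊆ N := by
    rintro x ⟨hxA, hxB⟩
    by_contra hxN
    simp only [hNdef, Set.mem_union, Set.mem_setOf_eq, not_or] at hxN
    obtain ⟨⟨hp, hq⟩, hz⟩ := hxN
    rcases (Ne.lt_or_gt hp) with hp' | hp' <;> rcases (Ne.lt_or_gt hz) with hz' | hz'
    · have hq' : ⟪x, v⟫ < 0 := by rw [hvinner x]; nlinarith
      exact hxA ((sign_eq_iff _ _).mpr (Or.inr (Or.inl ⟨hp', hq'⟩)))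
    · rcases (Ne.lt_or_gt hq) with hq' | hq'
      · exact hxA ((sign_eq_iff _ _).mpr (Or.inr (Or.inl ⟨hp', hq'⟩)))
      · exact hxB ((sign_eq_iff _ _).mpr (Or.inl ⟨hq', hz'⟩))
    · rcases (Ne.lt_or_gt hq) with hq' | hq'
      · exact hxB ((sign_eq_iff _ _).mpr (Or.inr (Or.inl ⟨hq', hz'⟩)))
      · exact hxA ((sign_eq_iff _ _).mpr (Or.inl ⟨hp', hq'⟩))
    · have hq' : 0 < ⟪x, v⟫ := by rw [hvinner x]; positivity
      exact hxA ((sign_eq_iff _ _).mpr (Or.inl ⟨hp', hq'⟩))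
  have hAmeas : MeasurableSet A := (measurable_signs u v).compl
  have hBmeas : MeasurableSet B := (measurable_signs v w).compl
  have h1 : μ C = μ (A ∪ B) := by
    refine le_antisymm (measure_mono hCsub) ?_
    calc μ (A ∪ B) ≤ μ (C ∪ N) := by
          refine measure_mono (fun x hx => ?_)
          by_cases hxC : x ∈ C
          · exact Or.inl hxC
          · exact Or.inr (hsub2 ⟨hx, hxC⟩)
      _ ≤ μ C + μ N := measure_union_le _ _
      _ = μ C := by rw [hN, add_zero]
  have h2 : μ (A ∩ B) = 0 := measure_mono_null hsub3 hN
  have h3 := measure_union_add_inter (μ := μ) A hBmeas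
  rw [h1, ← h3, h2, add_zero]

lemma measure_bad_pair (μ : Measure E) [IsProbabilityMeasure μ]
    (hinv : ∀ T : E ≃ₗᵢ[ℝ] E, μ.map T = μ)
    {u v u' v' : E}
    (hu : ‖u‖ = 1) (hv : ‖v‖ = 1) (hu' : ‖u'‖ = 1) (hv' : ‖v'‖ = 1)
    (ht : ⟪u, v⟫ = ⟪u', v'⟫) :
    μ {r : E | Real.sign ⟪r, u⟫ ≠ Real.sign ⟪r, v⟫}
      = μ {r : E | Real.sign ⟪r, u'⟫ ≠ Real.sign ⟪r, v'⟫} := by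
  obtain ⟨T, hT1, hT2⟩ := exists_isometry_pair hu hv hu' hv' ht
  have heq : μ {r : E | Real.sign ⟪r, u'⟫ = Real.sign ⟪r, v'⟫}
      = μ {r : E | Real.sign ⟪r, u⟫ = Real.sign ⟪r, v⟫} := by
    rw [← hT1, ← hT2]
    exact measure_sign_eq μ hinv T u v
  have h1 : {r : E | Real.sign ⟪r, u⟫ ≠ Real.sign ⟪r, v⟫}
      = {r : E | Real.sign ⟪r, u⟫ = Real.sign ⟪r, v⟫}ᶜ := rfl
  have h2 : {r : E | Real.sign ⟪r, u'⟫ ≠ Real.sign ⟪r, v'⟫}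
      = {r : E | Real.sign ⟪r, u'⟫ = Real.sign ⟪r, v'⟫}ᶜ := rfl
  rw [h1, h2, measure_compl (measurable_signs u v) (measure_ne_top μ _),
    measure_compl (measurable_signs u' v') (measure_ne_top μ _), heq]

set_option maxHeartbeats 1000000 in
lemma F_linear (μ : Measure E) [IsProbabilityMeasure μ]
    (hsphere : μ (Metric.sphere (0 : E) 1) = 1)
    (hinv : ∀ T : E ≃ₗᵢ[ℝ] E, μ.map T = μ)
    {e₁ e₂ : E} (he : Orthonormal ℝ ![e₁, e₂]) :
    ∀ θ : ℝ, θ ∈ Set.Icc 0 Real.pi →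
      (μ {r : E | Real.sign ⟪r, e₁⟫
          ≠ Real.sign ⟪r, Real.cos θ • e₁ + Real.sin θ • e₂⟫}).toReal
        = θ / Real.pi := by
  have hee := orthonormal_iff_ite.mp he
  have he11 : ⟪e₁, e₁⟫ = (1:ℝ) := by simpa using hee 0 0
  have he22 : ⟪e₂, e₂⟫ = (1:ℝ) := by simpa using hee 1 1
  have he12 : ⟪e₁, e₂⟫ = (0:ℝ) := by simpa using hee 0 1
  have he21 : ⟪e₂, e₁⟫ = (0:ℝ) := by simpa using hee 1 0
  have he1norm : ‖e₁‖ = 1 := by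
    have h2 : ‖e₁‖^2 = 1 := by rw [← real_inner_self_eq_norm_sq, he11]
    calc ‖e₁‖ = Real.sqrt (‖e₁‖^2) := (Real.sqrt_sq (norm_nonneg _)).symm
      _ = 1 := by rw [h2]; exact Real.sqrt_one
  have he1ne : e₁ ≠ 0 := by
    intro h; rw [h, norm_zero] at he1norm; norm_num at he1norm
  set vv : ℝ → E := fun θ => Real.cos θ • e₁ + Real.sin θ • e₂ with hvvdef
  have hvinner : ∀ θ, ⟪e₁, vv θ⟫ = Real.cos θ := by
    intro θ
    simp only [hvvdef, inner_add_right, real_inner_smul_right, he11, he12]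
    ring
  have hvvinner : ∀ a b, ⟪vv a, vv b⟫ = Real.cos (b - a) := by
    intro a b
    simp only [hvvdef, inner_add_left, inner_add_right, real_inner_smul_left,
      real_inner_smul_right, he11, he12, he21, he22]
    rw [Real.cos_sub]
    ring
  have hvnorm : ∀ θ, ‖vv θ‖ = 1 := by
    intro θ
    have h2 : ‖vv θ‖^2 = 1 := by
      rw [← real_inner_self_eq_norm_sq]
      have := hvvinner θ θ
      simpa using this
    calc ‖vv θ‖ = Real.sqrt (‖vv θ‖^2) := (Real.sqrt_sq (norm_nonneg _)).symm
      _ = 1 := by rw [h2]; exact Real.sqrt_one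
  have hvne : ∀ θ, vv θ ≠ 0 := by
    intro θ h
    have := hvnorm θ
    rw [h, norm_zero] at this
    norm_num at this
  set G : ℝ → ℝ :=
    fun θ => (μ {r : E | Real.sign ⟪r, e₁⟫ ≠ Real.sign ⟪r, vv θ⟫}).toReal with hGdef
  have Gnonneg : ∀ θ, 0 ≤ G θ := fun θ => ENNReal.toReal_nonneg
  have Ginv : ∀ (u w : E), ‖u‖ = 1 → ‖w‖ = 1 → ∀ θ, ⟪u, w⟫ = Real.cos θ →
      (μ {r : E | Real.sign ⟪r, u⟫ ≠ Real.sign ⟪r, w⟫}).toReal = G θ := by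
    intro u w hu hw θ ht
    have h := measure_bad_pair μ hinv hu hw he1norm (hvnorm θ) (by rw [ht, hvinner])
    exact congrArg ENNReal.toReal h
  have G0 : G 0 = 0 := by
    have hvv0 : vv 0 = e₁ := by simp [hvvdef]
    have : {r : E | Real.sign ⟪r, e₁⟫ ≠ Real.sign ⟪r, vv 0⟫} = ∅ := by
      rw [hvv0]
      ext r
      simp
    rw [hGdef]
    simp only [this, measure_empty, ENNReal.toReal_zero]
  have hvvpi : vv Real.pi = -e₁ := by
    simp [hvvdef]
  have hbadpi : ∀ u : E, {r : E | Real.sign ⟪r, u⟫ ≠ Real.sign ⟪r, -u⟫}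
      = {r : E | ⟪r, u⟫ = (0:ℝ)}ᶜ := by
    intro u
    ext r
    simp only [Set.mem_setOf_eq, Set.mem_compl_iff, inner_neg_right, Real.sign_neg]
    constructor
    · intro h h0
      rw [h0, Real.sign_zero] at h
      simp at h
    · intro h h2
      have : Real.sign ⟪r, u⟫ = 0 := by linarith
      exact h (Real.sign_eq_zero_iff.mp this)
  have he1meas : MeasurableSet {r : E | ⟪r, e₁⟫ = (0:ℝ)} :=
    measurableSet_eq_fun (Continuous.measurable (continuous_id.inner continuous_const))
      measurable_const
  have Gπ : G Real.pi = 1 := by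
    have h1 : G Real.pi
        = (μ {r : E | Real.sign ⟪r, e₁⟫ ≠ Real.sign ⟪r, vv Real.pi⟫}).toReal := rfl
    rw [h1, hvvpi, hbadpi e₁, measure_compl he1meas (measure_ne_top μ _),
      hyperplane_null μ hsphere hinv he1ne, measure_univ, tsub_zero, ENNReal.toReal_one]
  have Gadd : ∀ θ₁ θ₂ : ℝ, 0 < θ₁ → 0 < θ₂ → θ₁ + θ₂ ≤ Real.pi →
      G (θ₁ + θ₂) = G θ₁ + G θ₂ := by
    intro θ₁ θ₂ h1 h2 hle
    rcases lt_or_eq_of_le hle with hlt | heqπ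
    · -- strict case
      set s : ℝ := Real.sin (θ₁ + θ₂) with hsdef
      have hs : 0 < s := Real.sin_pos_of_pos_of_lt_pi (by linarith) hlt
      have hsin1 : 0 < Real.sin θ₁ := Real.sin_pos_of_pos_of_lt_pi h1 (by linarith)
      have hsin2 : 0 < Real.sin θ₂ := Real.sin_pos_of_pos_of_lt_pi h2 (by linarith)
      set c₁ : ℝ := Real.sin θ₂ / s with hc₁def
      set c₂ : ℝ := Real.sin θ₁ / s with hc₂def
      have hc₁ : 0 < c₁ := div_pos hsin2 hs
      have hc₂ : 0 < c₂ := div_pos hsin1 hs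
      have key : Real.sin θ₂ + Real.sin θ₁ * Real.cos (θ₁ + θ₂) = Real.cos θ₁ * s := by
        have h := Real.sin_sub (θ₁ + θ₂) θ₁
        have harg : θ₁ + θ₂ - θ₁ = θ₂ := by ring
        rw [harg] at h
        rw [hsdef]
        linarith
      have scalar1 : c₁ + c₂ * Real.cos (θ₁ + θ₂) = Real.cos θ₁ := by
        rw [hc₁def, hc₂def]
        field_simp
        linarith
      have scalar2 : c₂ * Real.sin (θ₁ + θ₂) = Real.sin θ₁ := by
        rw [hc₂def, ← hsdef]
        field_simp
      have hrep : vv θ₁ = c₁ • e₁ + c₂ • vv (θ₁ + θ₂) := by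
        have : c₁ • e₁ + c₂ • vv (θ₁ + θ₂) = vv θ₁ := by
          simp only [hvvdef]
          rw [smul_add, smul_smul, smul_smul, ← add_assoc, ← add_smul, scalar1, scalar2]
        exact this.symm
      have hadd := measure_bad_add μ hsphere hinv he1ne (hvne θ₁) (hvne (θ₁ + θ₂))
        hc₁ hc₂ hrep
      have hG2 : (μ {r : E | Real.sign ⟪r, vv θ₁⟫ ≠ Real.sign ⟪r, vv (θ₁ + θ₂)⟫}).toReal
          = G θ₂ := by
        apply Ginv _ _ (hvnorm θ₁) (hvnorm (θ₁ + θ₂))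
        rw [hvvinner θ₁ (θ₁ + θ₂)]
        congr 1
        ring
      have hLHS : G (θ₁ + θ₂)
          = (μ {r : E | Real.sign ⟪r, e₁⟫ ≠ Real.sign ⟪r, vv (θ₁ + θ₂)⟫}).toReal := rfl
      have hAG : (μ {r : E | Real.sign ⟪r, e₁⟫ ≠ Real.sign ⟪r, vv θ₁⟫}).toReal = G θ₁ := rfl
      rw [hLHS, hadd, ENNReal.toReal_add (measure_ne_top μ _) (measure_ne_top μ _), hAG, hG2]
    · -- boundary case θ₁ + θ₂ = π
      set A := {r : E | Real.sign ⟪r, e₁⟫ ≠ Real.sign ⟪r, vv θ₁⟫} with hAdef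
      set B := {r : E | Real.sign ⟪r, vv θ₁⟫ ≠ Real.sign ⟪r, -e₁⟫} with hBdef
      have hN : μ ({r : E | ⟪r, e₁⟫ = (0:ℝ)} ∪ {r : E | ⟪r, vv θ₁⟫ = (0:ℝ)}) = 0 :=
        measure_union_null (hyperplane_null μ hsphere hinv he1ne)
          (hyperplane_null μ hsphere hinv (hvne θ₁))
      have hcompl : (A ∪ B)ᶜ ⊆ {r : E | ⟪r, e₁⟫ = (0:ℝ)} ∪ {r : E | ⟪r, vv θ₁⟫ = (0:ℝ)} := by
        intro x hx
        simp only [Set.mem_compl_iff, Set.mem_union, hAdef, hBdef, Set.mem_setOf_eq,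
          not_or, not_not] at hx
        obtain ⟨hx1, hx2⟩ := hx
        rw [inner_neg_right, Real.sign_neg] at hx2
        have : Real.sign ⟪x, e₁⟫ = 0 := by linarith [hx1, hx2]
        exact Or.inl (Real.sign_eq_zero_iff.mp this)
      have hint : A ∩ B ⊆ {r : E | ⟪r, e₁⟫ = (0:ℝ)} ∪ {r : E | ⟪r, vv θ₁⟫ = (0:ℝ)} := by
        rintro x ⟨hxA, hxB⟩
        simp only [hAdef, hBdef, Set.mem_setOf_eq] at hxA hxB
        rw [inner_neg_right, Real.sign_neg] at hxB
        by_contra hcon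
        simp only [Set.mem_union, Set.mem_setOf_eq, not_or] at hcon
        obtain ⟨hp, hq⟩ := hcon
        rcases Ne.lt_or_gt hp with hp' | hp' <;> rcases Ne.lt_or_gt hq with hq' | hq'
        · exact hxA ((sign_eq_iff _ _).mpr (Or.inr (Or.inl ⟨hp', hq'⟩)))
        · apply hxB
          rw [Real.sign_of_pos hq', Real.sign_of_neg hp']
          try norm_num
        · apply hxB
          rw [Real.sign_of_neg hq', Real.sign_of_pos hp']
          try norm_num
        · exact hxA ((sign_eq_iff _ _).mpr (Or.inl ⟨hp', hq'⟩))
      have hABmeas : MeasurableSet B := (measurable_signs (vv θ₁) (-e₁)).compl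
      have hUnion : μ (A ∪ B) = 1 := by
        refine le_antisymm prob_le_one ?_
        have h1 : (1:ENNReal) = μ Set.univ := measure_univ.symm
        rw [h1]
        calc μ Set.univ ≤ μ ((A ∪ B) ∪ ({r : E | ⟪r, e₁⟫ = (0:ℝ)}
              ∪ {r : E | ⟪r, vv θ₁⟫ = (0:ℝ)})) := by
              refine measure_mono (fun x _ => ?_)
              by_cases hx : x ∈ A ∪ B
              · exact Or.inl hx
              · exact Or.inr (hcompl hx)
          _ ≤ μ (A ∪ B) + μ ({r : E | ⟪r, e₁⟫ = (0:ℝ)}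
              ∪ {r : E | ⟪r, vv θ₁⟫ = (0:ℝ)}) := measure_union_le _ _
          _ = μ (A ∪ B) := by rw [hN, add_zero]
      have hInter : μ (A ∩ B) = 0 := measure_mono_null hint hN
      have hsum : μ A + μ B = 1 := by
        rw [← measure_union_add_inter (μ := μ) A hABmeas, hUnion, hInter, add_zero]
      have hθ₂ : θ₂ = Real.pi - θ₁ := by linarith
      have hBG : (μ B).toReal = G θ₂ := by
        apply Ginv _ _ (hvnorm θ₁) (by rw [norm_neg]; exact he1norm)
        rw [inner_neg_right]
        have : ⟪vv θ₁, e₁⟫ = Real.cos θ₁ := by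
          rw [real_inner_comm]; exact hvinner θ₁
        rw [this, hθ₂, Real.cos_pi_sub]
      have hAG : (μ A).toReal = G θ₁ := rfl
      have : G (θ₁ + θ₂) = 1 := by rw [heqπ, Gπ]
      rw [this, ← hAG, ← hBG, ← ENNReal.toReal_add (measure_ne_top μ _) (measure_ne_top μ _),
        hsum, ENNReal.toReal_one]
  have Gmono : ∀ a b : ℝ, 0 ≤ a → a ≤ b → b ≤ Real.pi → G a ≤ G b := by
    intro a b ha hab hb
    rcases eq_or_lt_of_le hab with rfl | hab'
    · exact le_rfl
    · rcases eq_or_lt_of_le ha with rfl | ha'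
      · rw [G0]; exact Gnonneg b
      · have hb' : b = a + (b - a) := by ring
        rw [hb', Gadd a (b - a) ha' (by linarith) (by linarith)]
        linarith [Gnonneg (b - a)]
  have Gmul : ∀ n : ℕ, ∀ θ : ℝ, 0 < θ → (n : ℝ) * θ ≤ Real.pi → G ((n : ℝ) * θ) = n * G θ := by
    intro n
    induction n with
    | zero => intro θ _ _; simp [G0]
    | succ n ih =>
      intro θ hθ hle
      have hcast : ((n + 1 : ℕ) : ℝ) = (n : ℝ) + 1 := by push_cast; ring
      rcases Nat.eq_zero_or_pos n with rfl | hn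
      · simp
      · have hnpos : (0:ℝ) < (n : ℝ) * θ := by
          apply mul_pos _ hθ
          exact_mod_cast hn
        have harg : ((n + 1 : ℕ) : ℝ) * θ = (n : ℝ) * θ + θ := by push_cast; ring
        have hle' : (n : ℝ) * θ ≤ Real.pi := by nlinarith [hcast ▸ hle]
        rw [harg, Gadd ((n : ℝ) * θ) θ hnpos hθ (by rw [← harg]; exact hle),
          ih θ hθ hle', hcast]
        ring
  have Gfrac : ∀ n : ℕ, 1 ≤ n → ∀ k : ℕ, k ≤ n →
      G ((k : ℝ) * (Real.pi / n)) = (k : ℝ) / n := by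
    intro n hn k hk
    have hnR : (0:ℝ) < n := by exact_mod_cast hn
    have hpi : 0 < Real.pi / n := div_pos Real.pi_pos hnR
    have hGn : (n : ℝ) * G (Real.pi / n) = 1 := by
      rw [← Gmul n (Real.pi / n) hpi (by rw [mul_div_cancel₀]; exact hnR.ne')]
      rw [mul_div_cancel₀ _ hnR.ne', Gπ]
    have hkle : (k : ℝ) * (Real.pi / n) ≤ Real.pi := by
      have hkR : (k:ℝ) ≤ n := by exact_mod_cast hk
      calc (k:ℝ) * (Real.pi / n) ≤ (n:ℝ) * (Real.pi / n) :=
            mul_le_mul_of_nonneg_right hkR hpi.le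
        _ = Real.pi := by field_simp
    rw [Gmul k (Real.pi / n) hpi hkle]
    have : G (Real.pi / n) = 1 / n := by
      field_simp at hGn ⊢
      linarith
    rw [this]
    ring
  intro θ₀ hθ₀
  obtain ⟨hθ₀0, hθ₀π⟩ := hθ₀
  have hG₀ : G θ₀ = (μ {r : E | Real.sign ⟪r, e₁⟫
      ≠ Real.sign ⟪r, Real.cos θ₀ • e₁ + Real.sin θ₀ • e₂⟫}).toReal := rfl
  rw [← hG₀]
  have hbound : ∀ n : ℕ, 1 ≤ n → |G θ₀ - θ₀ / Real.pi| ≤ 1 / n := by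
    intro n hn
    have hnR : (0:ℝ) < n := by exact_mod_cast hn
    set k : ℕ := ⌊θ₀ * n / Real.pi⌋₊ with hkdef
    have hratio_nonneg : 0 ≤ θ₀ * n / Real.pi :=
      div_nonneg (mul_nonneg hθ₀0 (by positivity)) Real.pi_pos.le
    have hk1 : (k : ℝ) ≤ θ₀ * n / Real.pi := Nat.floor_le hratio_nonneg
    have hk2 : θ₀ * n / Real.pi < (k : ℝ) + 1 := Nat.lt_floor_add_one _
    have hkn : k ≤ n := by
      have hle : θ₀ * n / Real.pi ≤ (n : ℝ) := by
        rw [div_le_iff₀ Real.pi_pos]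
        nlinarith [Real.pi_pos]
      have := Nat.floor_le_floor hle
      rwa [Nat.floor_natCast] at this
    have hpin : 0 < Real.pi / n := div_pos Real.pi_pos hnR
    have hlow : (k : ℝ) / n ≤ G θ₀ := by
      rw [← Gfrac n hn k hkn]
      refine Gmono _ _ (by positivity) ?_ hθ₀π
      calc (k:ℝ) * (Real.pi / n) ≤ (θ₀ * n / Real.pi) * (Real.pi / n) :=
            mul_le_mul_of_nonneg_right hk1 hpin.le
        _ = θ₀ := by field_simp
    have hhigh : G θ₀ ≤ ((k : ℝ) + 1) / n := by
      rcases le_or_gt (k + 1) n with hk1n | hk1n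
      · have hb : θ₀ ≤ ((k:ℝ) + 1) * (Real.pi / n) := by
          calc θ₀ = (θ₀ * n / Real.pi) * (Real.pi / n) := by field_simp
            _ ≤ ((k:ℝ) + 1) * (Real.pi / n) :=
                mul_le_mul_of_nonneg_right hk2.le hpin.le
        have hc : ((k:ℝ) + 1) * (Real.pi / n) ≤ Real.pi := by
          have hkk : ((k:ℝ) + 1) ≤ n := by exact_mod_cast hk1n
          calc ((k:ℝ) + 1) * (Real.pi / n) ≤ (n:ℝ) * (Real.pi / n) :=
                mul_le_mul_of_nonneg_right hkk hpin.le
            _ = Real.pi := by field_simp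
        have hm := Gmono θ₀ (((k:ℝ) + 1) * (Real.pi / n)) hθ₀0 hb hc
        have hfr := Gfrac n hn (k + 1) hk1n
        push_cast at hfr
        linarith
      · calc G θ₀ ≤ G Real.pi := Gmono θ₀ Real.pi hθ₀0 hθ₀π le_rfl
          _ = 1 := Gπ
          _ ≤ ((k : ℝ) + 1) / n := by
            rw [le_div_iff₀ hnR]
            have : (n : ℝ) < (k : ℝ) + 1 := by exact_mod_cast hk1n
            linarith
    have hlow2 : (k : ℝ) / n ≤ θ₀ / Real.pi := by
      rw [div_le_div_iff₀ hnR Real.pi_pos]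
      rw [div_lt_iff₀ Real.pi_pos] at hk2
      rw [le_div_iff₀ Real.pi_pos] at hk1
      linarith
    have hhigh2 : θ₀ / Real.pi ≤ ((k : ℝ) + 1) / n := by
      rw [div_le_div_iff₀ Real.pi_pos hnR]
      rw [div_lt_iff₀ Real.pi_pos] at hk2
      linarith
    have hgap : ((k : ℝ) + 1) / n - (k : ℝ) / n = 1 / n := by field_simp; ring
    rw [abs_le]
    constructor <;> linarith
  by_contra hne
  have hpos : 0 < |G θ₀ - θ₀ / Real.pi| := abs_pos.mpr (sub_ne_zero.mpr hne)
  obtain ⟨n, hn⟩ := exists_nat_one_div_lt hpos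
  have := hbound (n + 1) (by omega)
  push_cast at this hn
  linarith

lemma sign_mul_pos {c : ℝ} (hc : 0 < c) (x : ℝ) : Real.sign (c * x) = Real.sign x := by
  rcases lt_trichotomy x 0 with h | h | h
  · rw [Real.sign_of_neg h, Real.sign_of_neg (mul_neg_of_pos_of_neg hc h)]
  · rw [h, mul_zero]
  · rw [Real.sign_of_pos h, Real.sign_of_pos (mul_pos hc h)]

end RHP

open RHP in
/-- Random hyperplane LSH (Goemans–Williamson): let `f, g` be nonzero vectors in `ℝ^d`
and let `r` be uniform on the unit sphere (modeled by a probability measure carried by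
the unit sphere and invariant under all linear isometries). Then
`P[sign(r·f) = sign(r·g)] = 1 − (1/π)·arccos(⟪f,g⟫/(‖f‖‖g‖))`. -/
theorem random_hyperplane_collision {d : ℕ}
    (μ : Measure (EuclideanSpace ℝ (Fin d))) [IsProbabilityMeasure μ]
    (hsphere : μ (Metric.sphere (0 : EuclideanSpace ℝ (Fin d)) 1) = 1)
    (hinv : ∀ T : EuclideanSpace ℝ (Fin d) ≃ₗᵢ[ℝ] EuclideanSpace ℝ (Fin d),
      μ.map T = μ)
    (f g : EuclideanSpace ℝ (Fin d)) (hf : f ≠ 0) (hg : g ≠ 0) :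
    (μ {r | Real.sign ⟪r, f⟫ = Real.sign ⟪r, g⟫}).toReal
      = 1 - (1 / Real.pi) * Real.arccos (⟪f, g⟫ / (‖f‖ * ‖g‖)) := by
  classical
  have hfn : (0:ℝ) < ‖f‖ := norm_pos_iff.mpr hf
  have hgn : (0:ℝ) < ‖g‖ := norm_pos_iff.mpr hg
  set u : EuclideanSpace ℝ (Fin d) := ‖f‖⁻¹ • f with hudef
  set v : EuclideanSpace ℝ (Fin d) := ‖g‖⁻¹ • g with hvdef
  have hu : ‖u‖ = 1 := norm_smul_inv_norm hf
  have hv : ‖v‖ = 1 := norm_smul_inv_norm hg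
  have hune : u ≠ 0 := by intro h; rw [h, norm_zero] at hu; norm_num at hu
  have hvne : v ≠ 0 := by intro h; rw [h, norm_zero] at hv; norm_num at hv
  have huu : ⟪u, u⟫ = (1:ℝ) := by
    rw [real_inner_self_eq_norm_sq, hu]; norm_num
  have hvv : ⟪v, v⟫ = (1:ℝ) := by
    rw [real_inner_self_eq_norm_sq, hv]; norm_num
  set t : ℝ := ⟪u, v⟫ with htdef
  have harg : ⟪f, g⟫ / (‖f‖ * ‖g‖) = t := by
    rw [htdef, hudef, hvdef, real_inner_smul_left, real_inner_smul_right]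
    field_simp
    try ring
  have hsets : {r : EuclideanSpace ℝ (Fin d) | Real.sign ⟪r, f⟫ = Real.sign ⟪r, g⟫}
      = {r : EuclideanSpace ℝ (Fin d) | Real.sign ⟪r, u⟫ = Real.sign ⟪r, v⟫} := by
    ext r
    have h1 : ⟪r, u⟫ = ‖f‖⁻¹ * ⟪r, f⟫ := by rw [hudef, real_inner_smul_right]
    have h2 : ⟪r, v⟫ = ‖g‖⁻¹ * ⟪r, g⟫ := by rw [hvdef, real_inner_smul_right]
    simp only [Set.mem_setOf_eq, h1, h2, sign_mul_pos (inv_pos.mpr hfn),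
      sign_mul_pos (inv_pos.mpr hgn)]
  rw [hsets, harg]
  have htle : |t| ≤ 1 := by
    have h := abs_real_inner_le_norm u v
    rw [hu, hv] at h
    simpa using h
  clear_value u v t
  rcases eq_or_ne t 1 with h1 | h1
  · -- v = u
    have hvu : u = v := (inner_eq_one_iff_of_norm_eq_one hu hv).mp (htdef.symm.trans h1)
    have hall : {r : EuclideanSpace ℝ (Fin d) | Real.sign ⟪r, u⟫ = Real.sign ⟪r, v⟫}
        = Set.univ := by
      ext r; simp [hvu]
    rw [hall, h1, measure_univ, ENNReal.toReal_one, Real.arccos_one]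
    ring
  rcases eq_or_ne t (-1) with h2 | h2
  · -- v = -u
    have hneg : ⟪u, -v⟫ = (1:ℝ) := by rw [inner_neg_right, ← htdef, h2]; norm_num
    have huv : u = -v := (inner_eq_one_iff_of_norm_eq_one hu (by rw [norm_neg]; exact hv)).mp hneg
    have hv2 : v = -u := by rw [huv, neg_neg]
    have hzero : {r : EuclideanSpace ℝ (Fin d) | Real.sign ⟪r, u⟫ = Real.sign ⟪r, v⟫}
        = {r : EuclideanSpace ℝ (Fin d) | ⟪r, u⟫ = (0:ℝ)} := by
      ext r
      simp only [Set.mem_setOf_eq, hv2, inner_neg_right, Real.sign_neg]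
      constructor
      · intro h
        have : Real.sign ⟪r, u⟫ = 0 := by linarith
        exact Real.sign_eq_zero_iff.mp this
      · intro h
        rw [h, Real.sign_zero]
        norm_num
    rw [hzero, hyperplane_null μ hsphere hinv hune, h2, Real.arccos_neg_one]
    have := Real.pi_ne_zero
    simp only [ENNReal.toReal_zero]
    field_simp
    norm_num
  · -- generic case
    have habs : |t| < 1 := lt_of_le_of_ne htle (by
      intro h
      rcases (abs_eq (by norm_num : (0:ℝ) ≤ 1)).mp h with h' | h'
      · exact h1 h'
      · exact h2 h')
    obtain ⟨hm1, hp1⟩ := abs_lt.mp habs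
    set θ : ℝ := Real.arccos t with hθdef
    have hcos : Real.cos θ = t := Real.cos_arccos hm1.le hp1.le
    have hθ0 : 0 ≤ θ := Real.arccos_nonneg t
    have hθπ : θ ≤ Real.pi := Real.arccos_le_pi t
    have ht2 : (0:ℝ) < 1 - t^2 := by nlinarith
    set s : ℝ := Real.sqrt (1 - t^2) with hsdef
    have hs : 0 < s := Real.sqrt_pos.mpr ht2
    have hsin : Real.sin θ = s := by rw [hθdef, Real.sin_arccos]
    set u₂ : EuclideanSpace ℝ (Fin d) := s⁻¹ • (v - t • u) with hu₂def
    have huv : ⟪u, v⟫ = t := htdef.symm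
    have hvu : ⟪v, u⟫ = t := by rw [real_inner_comm]; exact htdef.symm
    have ho1 : ⟪u, u₂⟫ = (0:ℝ) := by
      rw [hu₂def]
      simp only [real_inner_smul_right, inner_sub_right, huu, huv]
      ring
    have hs2 : s^2 = 1 - t^2 := Real.sq_sqrt ht2.le
    have ho2 : ⟪u₂, u₂⟫ = (1:ℝ) := by
      rw [hu₂def]
      simp only [real_inner_smul_left, real_inner_smul_right, inner_sub_left, inner_sub_right,
        huu, hvv, huv, hvu]
      field_simp
      nlinarith [hs2]
    have hon : Orthonormal ℝ ![u, u₂] := by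
      rw [orthonormal_iff_ite]
      intro i j
      fin_cases i <;> fin_cases j <;>
        simp only [Matrix.cons_val_zero, Matrix.cons_val_one, Matrix.head_cons] <;>
        first
          | simpa using huu
          | simpa using ho1
          | (rw [real_inner_comm]; simpa using ho1)
          | simpa using ho2
    have hvrep : Real.cos θ • u + Real.sin θ • u₂ = v := by
      rw [hcos, hsin, hu₂def, smul_smul, mul_inv_cancel₀ hs.ne', one_smul]
      abel
    have hF := F_linear μ hsphere hinv hon θ ⟨hθ0, hθπ⟩
    rw [hvrep] at hF
    have hsum : μ {r : EuclideanSpace ℝ (Fin d) | Real.sign ⟪r, u⟫ = Real.sign ⟪r, v⟫}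
        + μ {r : EuclideanSpace ℝ (Fin d) | Real.sign ⟪r, u⟫ = Real.sign ⟪r, v⟫}ᶜ = 1 := by
      rw [measure_add_measure_compl (measurable_signs u v), measure_univ]
    have hcompl : {r : EuclideanSpace ℝ (Fin d) | Real.sign ⟪r, u⟫ ≠ Real.sign ⟪r, v⟫}
        = {r : EuclideanSpace ℝ (Fin d) | Real.sign ⟪r, u⟫ = Real.sign ⟪r, v⟫}ᶜ := rfl
    rw [hcompl] at hF
    have h3 := congrArg ENNReal.toReal hsum
    rw [ENNReal.toReal_add (measure_ne_top μ _) (measure_ne_top μ _), ENNReal.toReal_one] at h3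
    rw [hF] at h3
    have hdiv : 1 / Real.pi * θ = θ / Real.pi := by ring
    linarith
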